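/- Let I = [0, 3π/4], let μ₀ ≥ 1 be an integer and β > 0, and let ω : U → ℝ² be of class C^{μ₀+1} on an open neighborhood U of I, satisfying: for all φ ∈ I and all k ∈ ℤ² \ {0}, max_{0 ≤ μ ≤ μ₀} |(d/dφ)^μ (k·ω(φ))| ≥ β‖k‖. Then there exists C > 0 such that for every γ > 0 and every k ∈ ℤ² \ {0}, the Lebesgue measure of {φ ∈ I : |ω(φ)·k| ≤ γ‖k‖} is at most C γ^{1/μ₀}. -/

import Mathlib

open Real MeasureTheory
open scoped RealInnerProductSpace ENNReal

set_option maxHeartbeats 1000000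

noncomputable section

abbrev E2 := EuclideanSpace ℝ (Fin 2)

noncomputable def kv (k : Fin 2 → ℤ) : E2 :=
  EuclideanSpace.single 0 (k 0 : ℝ) + EuclideanSpace.single 1 (k 1 : ℝ)

section helpers
variable {E : Type*} [NormedAddCommGroup E] [NormedSpace ℝ E]



lemma iterDW_open (f : ℝ → E) {U : Set ℝ} (hU : IsOpen U) (n : ℕ) {x : ℝ} (hx : x ∈ U) :
    iteratedDerivWithin n f U x = iteratedDeriv n f x := by
  rw [iteratedDerivWithin_eq_iteratedFDerivWithin, iteratedDeriv_eq_iteratedFDeriv,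
    iteratedFDerivWithin_of_isOpen n hU hx]

lemma diffAt_iterDeriv (f : ℝ → E) {U : Set ℝ} (hU : IsOpen U) {n j : ℕ} (hj : j < n)
    (hf : ContDiffOn ℝ n f U) {x : ℝ} (hx : x ∈ U) :
    DifferentiableAt ℝ (iteratedDeriv j f) x := by
  have h1 : DifferentiableOn ℝ (iteratedDerivWithin j f U) U :=
    hf.differentiableOn_iteratedDerivWithin (by exact_mod_cast hj) hU.uniqueDiffOn
  have h2 : DifferentiableOn ℝ (iteratedDeriv j f) U :=
    h1.congr (fun y hy => (iterDW_open f hU j hy).symm)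
  exact (h2 x hx).differentiableAt (hU.mem_nhds hx)

lemma contOn_iterDeriv (f : ℝ → E) {U : Set ℝ} (hU : IsOpen U) {n j : ℕ} (hj : j ≤ n)
    (hf : ContDiffOn ℝ n f U) : ContinuousOn (iteratedDeriv j f) U := by
  have h1 : ContinuousOn (iteratedDerivWithin j f U) U :=
    hf.continuousOn_iteratedDerivWithin (by exact_mod_cast hj) hU.uniqueDiffOn
  exact h1.congr (fun y hy => (iterDW_open f hU j hy).symm)

lemma hasDerivAt_iterDeriv (f : ℝ → E) {U : Set ℝ} (hU : IsOpen U) {n j : ℕ} (hj : j < n)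
    (hf : ContDiffOn ℝ n f U) {x : ℝ} (hx : x ∈ U) :
    HasDerivAt (iteratedDeriv j f) (iteratedDeriv (j+1) f x) x := by
  rw [iteratedDeriv_succ]
  exact (diffAt_iterDeriv f hU hj hf hx).hasDerivAt

lemma iterDeriv_clm_comp (L : E →L[ℝ] ℝ) (ω : ℝ → E) {U : Set ℝ} (hU : IsOpen U) {n : ℕ}
    (hω : ContDiffOn ℝ n ω U) :
    ∀ j ≤ n, ∀ x ∈ U, iteratedDeriv j (fun t => L (ω t)) x = L (iteratedDeriv j ω x) := by
  intro j
  induction j with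
  | zero => intro _ x _; simp [iteratedDeriv_zero]
  | succ j ih =>
    intro hj x hx
    rw [iteratedDeriv_succ]
    have hEq : Set.EqOn (iteratedDeriv j (fun t => L (ω t))) (fun t => L (iteratedDeriv j ω t)) U :=
      fun y hy => ih (le_of_lt hj) y hy
    have h1 : HasDerivAt (iteratedDeriv j ω) (iteratedDeriv (j+1) ω x) x :=
      hasDerivAt_iterDeriv ω hU hj hω hx
    have hd : HasDerivAt (fun t => L (iteratedDeriv j ω t)) (L (iteratedDeriv (j+1) ω x)) x :=
      L.hasFDerivAt.comp_hasDerivAt x h1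
    have heq2 : deriv (iteratedDeriv j (fun t => L (ω t))) x
        = deriv (fun t => L (iteratedDeriv j ω t)) x :=
      Filter.EventuallyEq.deriv_eq (Filter.eventuallyEq_of_mem (hU.mem_nhds hx) hEq)
    rw [heq2, hd.deriv]

lemma mvt_slope (f f' : ℝ → ℝ) {a b : ℝ}
    (hder : ∀ x ∈ Set.Icc a b, HasDerivAt f (f' x) x)
    {x y : ℝ} (hx : x ∈ Set.Icc a b) (hy : y ∈ Set.Icc a b) (hxy : x < y) :
    ∃ ξ ∈ Set.Ioo x y, f' ξ = (f y - f x)/(y - x) := by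
  have hsub : Set.Icc x y ⊆ Set.Icc a b := Set.Icc_subset_Icc hx.1 hy.2
  exact exists_hasDerivAt_eq_slope f f' hxy
    (fun t ht => ((hder t (hsub ht)).continuousAt).continuousWithinAt)
    (fun t ht => hder t (hsub (Set.Ioo_subset_Icc_self ht)))

lemma gap_le (f f' : ℝ → ℝ) {a b c δ : ℝ} (hc : 0 < c)
    (hder : ∀ x ∈ Set.Icc a b, HasDerivAt f (f' x) x)
    (hlow : ∀ x ∈ Set.Icc a b, c ≤ |f' x|)
    {x y : ℝ} (hx : x ∈ Set.Icc a b) (hy : y ∈ Set.Icc a b)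
    (hfx : |f x| ≤ δ) (hfy : |f y| ≤ δ) (hxy : x ≤ y) : y - x ≤ 2*δ/c := by
  have hδ : 0 ≤ δ := le_trans (abs_nonneg _) hfx
  rcases eq_or_lt_of_le hxy with h | h
  · subst h; rw [sub_self]; positivity
  · obtain ⟨ξ, hξ, heq⟩ := mvt_slope f f' hder hx hy h
    have hξab : ξ ∈ Set.Icc a b :=
      Set.Icc_subset_Icc hx.1 hy.2 (Set.Ioo_subset_Icc_self hξ)
    have h1 : c ≤ |(f y - f x)/(y - x)| := heq ▸ hlow ξ hξab
    have h2 : |f y - f x| ≤ 2*δ := by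
      calc |f y - f x| ≤ |f y| + |f x| := abs_sub _ _
        _ ≤ 2*δ := by linarith
    rw [abs_div, abs_of_pos (by linarith : (0:ℝ) < y - x)] at h1
    rw [le_div_iff₀ hc]
    have := (le_div_iff₀ (by linarith : (0:ℝ) < y - x)).1 h1
    linarith

lemma lip_bound (f f' : ℝ → ℝ) {a b M : ℝ}
    (hder : ∀ x ∈ Set.Icc a b, HasDerivAt f (f' x) x)
    (hb : ∀ x ∈ Set.Icc a b, |f' x| ≤ M)
    {x y : ℝ} (hx : x ∈ Set.Icc a b) (hy : y ∈ Set.Icc a b) (hxy : x ≤ y) :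
    |f y - f x| ≤ M * (y - x) := by
  rcases eq_or_lt_of_le hxy with h | h
  · subst h
    rw [sub_self, abs_zero, sub_self, mul_zero]
  · obtain ⟨ξ, hξ, heq⟩ := mvt_slope f f' hder hx hy h
    have hξab : ξ ∈ Set.Icc a b :=
      Set.Icc_subset_Icc hx.1 hy.2 (Set.Ioo_subset_Icc_self hξ)
    have h1 : f y - f x = f' ξ * (y - x) := by
      rw [heq, div_mul_cancel₀]
      exact sub_ne_zero.2 (ne_of_gt h)
    rw [h1, abs_mul, abs_of_pos (by linarith : (0:ℝ) < y - x)]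
    exact mul_le_mul_of_nonneg_right (hb ξ hξab) (by linarith)
lemma pyartli (n : ℕ) (hn : 1 ≤ n) :
    ∀ (F : ℕ → ℝ → ℝ) (a b c ε : ℝ), 0 < c → 0 < ε →
    (∀ j < n, ∀ x ∈ Set.Icc a b, HasDerivAt (F j) (F (j+1) x) x) →
    (∀ x ∈ Set.Icc a b, c ≤ |F n x|) →
    volume {x ∈ Set.Icc a b | |F 0 x| ≤ ε} ≤ ENNReal.ofReal ((3:ℝ)^n * (ε/c) ^ ((n:ℝ)⁻¹)) := by
  induction n, hn using Nat.le_induction with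
  | base =>
    intro F a b c ε hc hε hder hlow
    have key : ∀ x ∈ {x ∈ Set.Icc a b | |F 0 x| ≤ ε}, ∀ y ∈ {x ∈ Set.Icc a b | |F 0 x| ≤ ε},
        x ≤ y → y - x ≤ 2*ε/c := fun x hx y hy hxy =>
      gap_le (F 0) (F 1) hc (hder 0 one_pos) hlow hx.1 hy.1 hx.2 hy.2 hxy
    calc volume {x ∈ Set.Icc a b | |F 0 x| ≤ ε}
        ≤ EMetric.diam {x ∈ Set.Icc a b | |F 0 x| ≤ ε} := Real.volume_le_diam _
      _ ≤ ENNReal.ofReal (2*ε/c) := by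
          apply EMetric.diam_le
          intro x hx y hy
          rw [edist_dist]
          apply ENNReal.ofReal_le_ofReal
          rcases le_total x y with h | h
          · rw [Real.dist_eq, abs_of_nonpos (by linarith)]
            have := key x hx y hy h; linarith
          · rw [Real.dist_eq, abs_of_nonneg (by linarith)]
            have := key y hy x hx h; linarith
      _ ≤ ENNReal.ofReal ((3:ℝ)^1 * (ε/c) ^ (((1:ℕ):ℝ))⁻¹) := by
          apply ENNReal.ofReal_le_ofReal
          have hεc : 0 < ε/c := div_pos hε hc
          rw [Nat.cast_one, inv_one, Real.rpow_one, pow_one, mul_div_assoc]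
          linarith
  | succ n hn ih =>
    intro F a b c ε hc hε hder hlow
    have hεc : 0 < ε/c := div_pos hε hc
    set t : ℝ := (((n:ℝ))+1)⁻¹ with ht
    have htpos : 0 < t := by positivity
    set X : ℝ := (ε/c) ^ t with hXdef
    have hX : 0 < X := Real.rpow_pos_of_pos hεc _
    set δ : ℝ := c * X with hδdef
    have hδ : 0 < δ := mul_pos hc hX
    have hn0 : (n:ℝ) ≠ 0 := Nat.cast_ne_zero.2 (by omega)
    have hn1 : ((n:ℝ)+1) ≠ 0 := by positivity
    have hkey : (ε/δ) ^ ((n:ℝ)⁻¹) = X := by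
      have h1 : ε / δ = (ε/c) ^ (1 - t) := by
        rw [Real.rpow_sub hεc, Real.rpow_one, ← hXdef, hδdef, div_mul_eq_div_div]
      rw [h1, ← Real.rpow_mul (le_of_lt hεc), hXdef]
      congr 1
      rw [ht]
      field_simp
      ring
    have hgoalX : ((3:ℝ)^(n+1) * (ε/c) ^ (((n+1:ℕ):ℝ))⁻¹) = 3^(n+1) * X := by
      rw [hXdef, ht]; push_cast; ring_nf
    rw [hgoalX]
    by_cases hS : ∃ x ∈ Set.Icc a b, |F n x| < δ
    · -- sublevel set of F n nonempty
      set S := {x ∈ Set.Icc a b | |F n x| < δ} with hSdef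
      have hSne : S.Nonempty := by
        obtain ⟨x, hx1, hx2⟩ := hS; exact ⟨x, hx1, hx2⟩
      have hSsub : S ⊆ Set.Icc a b := fun x hx => hx.1
      have hbddA : BddAbove S := BddAbove.mono hSsub bddAbove_Icc
      have hbddB : BddBelow S := BddBelow.mono hSsub bddBelow_Icc
      set u := sInf S with hu
      set v := sSup S with hv
      have hau : a ≤ u := le_csInf hSne (fun x hx => hx.1.1)
      have huv : u ≤ v := csInf_le_csSup hSne hbddB hbddA
      have hvb : v ≤ b := csSup_le hSne (fun x hx => hx.1.2)
      have hgap : ∀ x ∈ S, ∀ y ∈ S, x ≤ y → y - x ≤ 2*δ/c := fun x hx y hy hxy =>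
        gap_le (F n) (F (n+1)) hc (hder n (lt_add_one n)) hlow hx.1 hy.1 hx.2.le hy.2.le hxy
      have hdc : 0 ≤ 2*δ/c := by positivity
      have hvu : v - u ≤ 2*δ/c := by
        have h2 : v ≤ u + 2*δ/c := csSup_le hSne (fun y hy => by
          have h3 : y - 2*δ/c ≤ u := le_csInf hSne (fun x hx => by
            rcases le_total x y with h | h
            · have := hgap x hx y hy h; linarith
            · linarith)
          linarith)
        linarith
      apply ENNReal.le_of_forall_pos_le_add
      intro η hη _
      set η2 : ℝ := (η:ℝ)/2 with hη2def
      have hη2 : 0 < η2 := by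
        rw [hη2def]; have : (0:ℝ) < η := by exact_mod_cast hη
        linarith
      have hsplit : {x ∈ Set.Icc a b | |F 0 x| ≤ ε} ⊆
          {x ∈ Set.Icc a (u - η2) | |F 0 x| ≤ ε} ∪
          (Set.Icc (u - η2) (v + η2) ∪ {x ∈ Set.Icc (v + η2) b | |F 0 x| ≤ ε}) := by
        intro x hx
        rcases le_or_gt x (u - η2) with h | h
        · exact Or.inl ⟨⟨hx.1.1, h⟩, hx.2⟩
        · rcases le_or_gt x (v + η2) with h2 | h2
          · exact Or.inr (Or.inl ⟨h.le, h2⟩)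
          · exact Or.inr (Or.inr ⟨⟨h2.le, hx.1.2⟩, hx.2⟩)
      have hA : volume {x ∈ Set.Icc a (u - η2) | |F 0 x| ≤ ε}
          ≤ ENNReal.ofReal ((3:ℝ)^n * X) := by
        rw [← hkey]
        apply ih F a (u - η2) δ ε hδ hε
        · intro j hj x hx
          exact hder j (hj.trans (lt_add_one n)) x
            (Set.Icc_subset_Icc le_rfl (by linarith) hx)
        · intro x hx
          by_contra hcon
          push_neg at hcon
          have hxS : x ∈ S := ⟨Set.Icc_subset_Icc le_rfl (by linarith) hx, hcon⟩
          have := csInf_le hbddB hxS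
          have := hx.2
          simp only [← hu] at *
          linarith
      have hC : volume {x ∈ Set.Icc (v + η2) b | |F 0 x| ≤ ε}
          ≤ ENNReal.ofReal ((3:ℝ)^n * X) := by
        rw [← hkey]
        apply ih F (v + η2) b δ ε hδ hε
        · intro j hj x hx
          exact hder j (hj.trans (lt_add_one n)) x
            (Set.Icc_subset_Icc (by linarith) le_rfl hx)
        · intro x hx
          by_contra hcon
          push_neg at hcon
          have hxS : x ∈ S := ⟨Set.Icc_subset_Icc (by linarith) le_rfl hx, hcon⟩
          have := le_csSup hbddA hxS
          have := hx.1
          simp only [← hv] at *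
          linarith
      have hB : volume (Set.Icc (u - η2) (v + η2))
          ≤ ENNReal.ofReal (2*X) + ENNReal.ofReal (η:ℝ) := by
        rw [Real.volume_Icc]
        have h4 : v + η2 - (u - η2) ≤ 2*X + (η:ℝ) := by
          have h5 : 2*δ/c = 2*X := by
            rw [hδdef]; field_simp
          rw [hη2def] at *
          linarith [hvu]
        calc ENNReal.ofReal (v + η2 - (u - η2)) ≤ ENNReal.ofReal (2*X + (η:ℝ)) :=
              ENNReal.ofReal_le_ofReal h4
          _ ≤ ENNReal.ofReal (2*X) + ENNReal.ofReal (η:ℝ) := ENNReal.ofReal_add_le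
      have hXpos : (0:ℝ) ≤ X := hX.le
      calc volume {x ∈ Set.Icc a b | |F 0 x| ≤ ε}
          ≤ volume {x ∈ Set.Icc a (u - η2) | |F 0 x| ≤ ε} +
            (volume (Set.Icc (u - η2) (v + η2)) +
             volume {x ∈ Set.Icc (v + η2) b | |F 0 x| ≤ ε}) := by
            refine (measure_mono hsplit).trans ?_
            refine (measure_union_le _ _).trans ?_
            exact add_le_add le_rfl (measure_union_le _ _)
        _ ≤ ENNReal.ofReal ((3:ℝ)^n * X) +
            ((ENNReal.ofReal (2*X) + ENNReal.ofReal (η:ℝ)) + ENNReal.ofReal ((3:ℝ)^n * X)) :=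
            add_le_add hA (add_le_add hB hC)
        _ ≤ ENNReal.ofReal ((3:ℝ)^(n+1) * X) + ENNReal.ofReal (η:ℝ) := by
            rw [← ENNReal.ofReal_add (by positivity) (by positivity),
               ← ENNReal.ofReal_add (by positivity) (by positivity)]
            have h6 : (1:ℝ) ≤ 3^n := one_le_pow₀ (by norm_num)
            have h8 : (0:ℝ) ≤ (η:ℝ) := η.2
            calc ENNReal.ofReal ((3:ℝ)^n * X) + ENNReal.ofReal (2*X + (η:ℝ) + (3:ℝ)^n * X)
                = ENNReal.ofReal ((3:ℝ)^n * X + (2*X + (η:ℝ) + (3:ℝ)^n * X)) :=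
                  (ENNReal.ofReal_add (by positivity) (by positivity)).symm
              _ ≤ ENNReal.ofReal ((3:ℝ)^(n+1) * X + (η:ℝ)) := by
                  apply ENNReal.ofReal_le_ofReal
                  have h7 : (3:ℝ)^(n+1) = 3*3^n := by ring
                  have h9 : (3:ℝ) ≤ 3^n := by
                    calc (3:ℝ) = 3^1 := (pow_one 3).symm
                      _ ≤ 3^n := by exact pow_le_pow_right₀ (by norm_num) hn
                  nlinarith
              _ = _ := ENNReal.ofReal_add (by positivity) h8
        _ ≤ ENNReal.ofReal ((3:ℝ)^(n+1) * X) + η := by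
            rw [ENNReal.ofReal_coe_nnreal]
    · -- F n bounded below by δ everywhere
      push_neg at hS
      have hlow' : ∀ x ∈ Set.Icc a b, δ ≤ |F n x| := fun x hx => hS x hx
      have := ih F a b δ ε hδ hε (fun j hj => hder j (hj.trans (lt_add_one n))) hlow'
      refine this.trans (ENNReal.ofReal_le_ofReal ?_)
      rw [hkey]
      have h6 : (0:ℝ) < 3^n := by positivity
      have h7 : (3:ℝ)^(n+1) = 3*3^n := by ring
      nlinarith [hX]

end helpers

/-- Rüssmann-type measure estimate: if on `I = [0, 3π/4]` some derivative of order `≤ μ₀` of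
`k·ω` is bounded below by `β‖k‖`, then the measure of `{φ ∈ I : |ω(φ)·k| ≤ γ‖k‖}` is
at most `C γ^{1/μ₀}`. -/
theorem stmt13 (μ₀ : ℕ) (hμ₀ : 1 ≤ μ₀) (β : ℝ) (hβ : 0 < β)
    (U : Set ℝ) (hU : IsOpen U)
    (hIU : Set.Icc (0 : ℝ) (3 * π / 4) ⊆ U)
    (ω : ℝ → E2) (hω : ContDiffOn ℝ (μ₀ + 1 : ℕ) ω U)
    (hlow : ∀ φ ∈ Set.Icc (0 : ℝ) (3 * π / 4), ∀ k : Fin 2 → ℤ, k ≠ 0 →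
      ∃ μ : ℕ, μ ≤ μ₀ ∧
        β * ‖kv k‖ ≤ |iteratedDeriv μ (fun t => ⟪kv k, ω t⟫) φ|) :
    ∃ C : ℝ, 0 < C ∧ ∀ γ : ℝ, 0 < γ → ∀ k : Fin 2 → ℤ, k ≠ 0 →
      volume {φ ∈ Set.Icc (0 : ℝ) (3 * π / 4) | |⟪ω φ, kv k⟫| ≤ γ * ‖kv k‖}
        ≤ ENNReal.ofReal (C * γ ^ (1 / (μ₀ : ℝ))) := by
  have hπ := Real.pi_pos
  set L : ℝ := 3 * π / 4 with hLdef
  have hLpos : 0 < L := by rw [hLdef]; linarith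
  -- uniform bound on derivatives of ω on I
  have hcontsum : ContinuousOn (fun x => ∑ j ∈ Finset.range (μ₀+2), ‖iteratedDeriv j ω x‖) U := by
    apply continuousOn_finset_sum
    intro j hj
    exact (contOn_iterDeriv ω hU (by simp at hj; omega : j ≤ μ₀+1) hω).norm
  obtain ⟨M₀, hM₀⟩ := (isCompact_Icc (a := (0:ℝ)) (b := L)).exists_bound_of_continuousOn
    (hcontsum.mono hIU)
  set M : ℝ := max M₀ 1 with hMdef
  have hMpos : 0 < M := lt_of_lt_of_le one_pos (le_max_right _ _)
  have hMb : ∀ j ≤ μ₀+1, ∀ x ∈ Set.Icc 0 L, ‖iteratedDeriv j ω x‖ ≤ M := by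
    intro j hj x hx
    have h1 : ‖iteratedDeriv j ω x‖ ≤ ∑ i ∈ Finset.range (μ₀+2), ‖iteratedDeriv i ω x‖ :=
      Finset.single_le_sum (f := fun i => ‖iteratedDeriv i ω x‖)
        (fun i _ => norm_nonneg _) (Finset.mem_range.2 (by omega))
    have h2 := hM₀ x hx
    rw [Real.norm_eq_abs] at h2
    calc ‖iteratedDeriv j ω x‖ ≤ _ := h1
      _ ≤ M₀ := le_trans (le_abs_self _) h2
      _ ≤ M := le_max_left _ _
  set ℓ : ℝ := β / (2*M) with hℓdef
  have hℓpos : 0 < ℓ := by rw [hℓdef]; positivity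
  set N : ℕ := ⌈L/ℓ⌉₊ + 1 with hNdef
  have hNpos : 0 < N := by omega
  have hNR : (0:ℝ) < N := by exact_mod_cast hNpos
  set h : ℝ := L / N with hhdef
  have hhpos : 0 < h := by rw [hhdef]; positivity
  have hNh : (N:ℝ) * h = L := by rw [hhdef]; field_simp
  have hhℓ : h ≤ ℓ := by
    rw [hhdef, div_le_iff₀ hNR]
    have h1 : L/ℓ ≤ (⌈L/ℓ⌉₊ : ℝ) := Nat.le_ceil _
    have h2 : ((⌈L/ℓ⌉₊ : ℕ) : ℝ) ≤ (N:ℝ) := by rw [hNdef]; push_cast; linarith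
    rw [div_le_iff₀ hℓpos] at h1
    calc L ≤ ⌈L/ℓ⌉₊ * ℓ := h1
      _ ≤ N * ℓ := by nlinarith
      _ = ℓ * N := by ring
  -- constant
  refine ⟨((N:ℝ) * 3^μ₀ + L) * (2/β) ^ ((μ₀:ℝ))⁻¹ + 1, ?_, ?_⟩
  · have h1 : (0:ℝ) < (2/β) ^ ((μ₀:ℝ))⁻¹ := Real.rpow_pos_of_pos (by positivity) _
    have h2 : (0:ℝ) ≤ (N:ℝ) * 3^μ₀ + L := by positivity
    nlinarith
  intro γ hγ k hk
  set K : E2 := kv k with hKdef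
  have hKne : K ≠ 0 := by
    intro h0
    apply hk
    funext i
    have h1 : ∀ j : Fin 2, K j = 0 := fun j => by simp [h0]
    have h2 : K 0 = (k 0 : ℝ) := by
      rw [hKdef]; simp [kv, EuclideanSpace.single_apply]
    have h3 : K 1 = (k 1 : ℝ) := by
      rw [hKdef]; simp [kv, EuclideanSpace.single_apply]
    fin_cases i
    · have := h1 0; rw [h2] at this; simpa using this
    · have := h1 1; rw [h3] at this; simpa using this
  have hKpos : 0 < ‖K‖ := norm_pos_iff.2 hKne
  set f : ℝ → ℝ := fun t => ⟪K, ω t⟫ with hfdef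
  have hfc : ContDiffOn ℝ (μ₀ + 1 : ℕ) f U := ContDiffOn.inner ℝ contDiffOn_const hω
  have hid : ∀ j ≤ μ₀+1, ∀ x ∈ U, iteratedDeriv j f x = ⟪K, iteratedDeriv j ω x⟫ := by
    intro j hj x hx
    have h0 := iterDeriv_clm_comp (innerSL ℝ K) ω hU hω j hj x hx
    simp only [innerSL_apply_apply] at h0
    exact h0
  have hfb : ∀ j ≤ μ₀+1, ∀ x ∈ Set.Icc 0 L, |iteratedDeriv j f x| ≤ M * ‖K‖ := by
    intro j hj x hx
    rw [hid j hj x (hIU hx)]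
    calc |⟪K, iteratedDeriv j ω x⟫| ≤ ‖K‖ * ‖iteratedDeriv j ω x‖ := abs_real_inner_le_norm _ _
      _ ≤ ‖K‖ * M := mul_le_mul_of_nonneg_left (hMb j hj x hx) (norm_nonneg _)
      _ = M * ‖K‖ := mul_comm _ _
  have hder : ∀ j < μ₀+1, ∀ x ∈ U, HasDerivAt (iteratedDeriv j f) (iteratedDeriv (j+1) f x) x :=
    fun j hj x hx => hasDerivAt_iterDeriv f hU hj hfc hx
  have hset : {φ ∈ Set.Icc (0:ℝ) L | |⟪ω φ, K⟫| ≤ γ * ‖K‖}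
      = {φ ∈ Set.Icc (0:ℝ) L | |f φ| ≤ γ * ‖K‖} := by
    ext φ
    have h9 : (⟪ω φ, K⟫ : ℝ) = f φ := real_inner_comm _ _
    simp only [Set.mem_setOf_eq, h9]
  rw [hset]
  set T := {φ ∈ Set.Icc (0:ℝ) L | |f φ| ≤ γ * ‖K‖} with hTdef
  have hJsub : ∀ i < N, Set.Icc ((i:ℝ)*h) (((i:ℝ)+1)*h) ⊆ Set.Icc 0 L := by
    intro i hi
    apply Set.Icc_subset_Icc
    · positivity
    · have h1 : (i:ℝ)+1 ≤ (N:ℝ) := by exact_mod_cast hi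
      nlinarith
  -- localization: on each small interval some fixed derivative is large
  have hlow2 : ∀ i < N, ∃ μ ≤ μ₀, ∀ x ∈ Set.Icc ((i:ℝ)*h) (((i:ℝ)+1)*h),
      β * ‖K‖ / 2 ≤ |iteratedDeriv μ f x| := by
    intro i hi
    have hmem : (i:ℝ)*h ∈ Set.Icc (0:ℝ) L :=
      hJsub i hi ⟨le_refl _, by nlinarith⟩
    obtain ⟨μ, hμ, hb⟩ := hlow ((i:ℝ)*h) hmem k hk
    refine ⟨μ, hμ, fun x hx => ?_⟩
    have hb' : β * ‖K‖ ≤ |iteratedDeriv μ f ((i:ℝ)*h)| := hb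
    have hlip : |iteratedDeriv μ f x - iteratedDeriv μ f ((i:ℝ)*h)| ≤ (M * ‖K‖) * (x - (i:ℝ)*h) := by
      apply lip_bound (iteratedDeriv μ f) (iteratedDeriv (μ+1) f)
        (a := (i:ℝ)*h) (b := ((i:ℝ)+1)*h)
      · exact fun y hy => hder μ (by omega) y (hIU (hJsub i hi hy))
      · exact fun y hy => hfb (μ+1) (by omega) y (hJsub i hi hy)
      · exact ⟨le_refl _, by nlinarith⟩
      · exact hx
      · exact hx.1
    have hxb : x - (i:ℝ)*h ≤ h := by have := hx.2; linarith [hx.2]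
    have h5 : (M * ‖K‖) * (x - (i:ℝ)*h) ≤ β * ‖K‖ / 2 := by
      have h6 : (M * ‖K‖) * (x - (i:ℝ)*h) ≤ (M * ‖K‖) * ℓ := by
        apply mul_le_mul_of_nonneg_left (le_trans hxb hhℓ) (by positivity)
      have h7 : (M * ‖K‖) * ℓ = β * ‖K‖ / 2 := by
        rw [hℓdef]; field_simp
      linarith
    have := abs_sub_abs_le_abs_sub (iteratedDeriv μ f x) (iteratedDeriv μ f ((i:ℝ)*h))
    -- |A| ≥ |B| - |A - B|... we need |A| ≥ |B| - |B - A|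
    have h8 : |iteratedDeriv μ f ((i:ℝ)*h)| - |iteratedDeriv μ f x|
        ≤ |iteratedDeriv μ f x - iteratedDeriv μ f ((i:ℝ)*h)| := by
      rw [abs_sub_comm]
      exact abs_sub_abs_le_abs_sub _ _
    linarith

  -- cover of [0, L] by the N intervals
  have hcover : Set.Icc (0:ℝ) L ⊆ ⋃ i ∈ Finset.range N, Set.Icc ((i:ℝ)*h) (((i:ℝ)+1)*h) := by
    intro x hx
    simp only [Set.mem_iUnion, Finset.mem_range]
    set i : ℕ := min (N-1) ⌊x/h⌋₊ with hidef
    have hiN : i < N := by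
      have h1 : i ≤ N-1 := min_le_left _ _
      omega
    have hcast : ((N-1:ℕ):ℝ) = (N:ℝ)-1 := by
      have h1 : (1:ℕ) ≤ N := hNpos
      push_cast [Nat.cast_sub h1]
      ring
    refine ⟨i, hiN, ?_, ?_⟩
    · by_cases hc : ⌊x/h⌋₊ ≤ N-1
      · have hieq : i = ⌊x/h⌋₊ := min_eq_right hc
        have h1 : (⌊x/h⌋₊:ℝ) ≤ x/h := Nat.floor_le (div_nonneg hx.1 hhpos.le)
        rw [hieq]
        calc (⌊x/h⌋₊:ℝ)*h ≤ (x/h)*h := by nlinarith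
          _ = x := by field_simp
      · push_neg at hc
        have hNle : N ≤ ⌊x/h⌋₊ := by omega
        have h1 : (N:ℝ) ≤ x/h :=
          le_trans (by exact_mod_cast hNle) (Nat.floor_le (div_nonneg hx.1 hhpos.le))
        have h2 : (N:ℝ)*h ≤ x := (le_div_iff₀ hhpos).1 h1
        have hieq : i = N-1 := min_eq_left (by omega)
        rw [hieq, hcast]
        nlinarith
    · by_cases hc : ⌊x/h⌋₊ ≤ N-1
      · have hieq : i = ⌊x/h⌋₊ := min_eq_right hc
        have h1 : x/h < (⌊x/h⌋₊:ℝ)+1 := Nat.lt_floor_add_one _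
        rw [hieq]
        have h2 := (div_lt_iff₀ hhpos).1 h1
        nlinarith
      · have hieq : i = N-1 := min_eq_left (by omega)
        rw [hieq, hcast]
        have h1 : ((N:ℝ)-1+1)*h = L := by rw [sub_add_cancel]; exact hNh
        rw [h1]; exact hx.2
  have hq : (0:ℝ) < (2/β) ^ ((μ₀:ℝ))⁻¹ := Real.rpow_pos_of_pos (by positivity) _
  have hgt : (0:ℝ) < γ ^ ((μ₀:ℝ))⁻¹ := Real.rpow_pos_of_pos hγ _
  have h3pow : (0:ℝ) < 3^μ₀ := by positivity
  rw [one_div]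
  by_cases hr : 2*γ/β < 1
  · -- small γ: use the Pyartli-type estimate on each subinterval
    have hTsub : T ⊆ ⋃ i ∈ Finset.range N, (T ∩ Set.Icc ((i:ℝ)*h) (((i:ℝ)+1)*h)) := by
      intro x hx
      have h0 := hcover hx.1
      simp only [Set.mem_iUnion, Finset.mem_range] at h0 ⊢
      obtain ⟨i, hi, hxi⟩ := h0
      exact ⟨i, hi, hx, hxi⟩
    set B : ℝ≥0∞ := ENNReal.ofReal ((3:ℝ)^μ₀ * (2*γ/β) ^ ((μ₀:ℝ))⁻¹) with hBdef
    have hbound : ∀ i ∈ Finset.range N,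
        volume (T ∩ Set.Icc ((i:ℝ)*h) (((i:ℝ)+1)*h)) ≤ B := by
      intro i hi'
      rw [Finset.mem_range] at hi'
      obtain ⟨μ, hμ, hblow⟩ := hlow2 i hi'
      rcases Nat.eq_zero_or_pos μ with hμ0 | hμ1
      · have hempty : T ∩ Set.Icc ((i:ℝ)*h) (((i:ℝ)+1)*h) = ∅ := by
          rw [Set.eq_empty_iff_forall_notMem]
          rintro x ⟨hxT, hxJ⟩
          have h1 := hblow x hxJ
          rw [hμ0, iteratedDeriv_zero] at h1
          have h2 : |f x| ≤ γ * ‖K‖ := hxT.2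
          have h4 : γ < β/2 := by
            rw [div_lt_one hβ] at hr; linarith
          nlinarith
        rw [hempty, measure_empty]; exact bot_le
      · have hres := pyartli μ hμ1 (fun j => iteratedDeriv j f) ((i:ℝ)*h) (((i:ℝ)+1)*h)
          (β * ‖K‖ / 2) (γ * ‖K‖) (by positivity) (by positivity)
          (fun j hj x hx => hder j (by omega) x (hIU (hJsub i hi' hx)))
          hblow
        have hsub2 : T ∩ Set.Icc ((i:ℝ)*h) (((i:ℝ)+1)*h)
            ⊆ {x ∈ Set.Icc ((i:ℝ)*h) (((i:ℝ)+1)*h) |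
                |(fun j => iteratedDeriv j f) 0 x| ≤ γ*‖K‖} := by
          rintro x ⟨hxT, hxJ⟩
          refine ⟨hxJ, ?_⟩
          show |iteratedDeriv 0 f x| ≤ γ*‖K‖
          rw [iteratedDeriv_zero]
          exact hxT.2
        have hratio : (γ * ‖K‖) / (β * ‖K‖ / 2) = 2*γ/β := by
          field_simp
        refine ((measure_mono hsub2).trans hres).trans ?_
        rw [hBdef, hratio]
        apply ENNReal.ofReal_le_ofReal
        have hrpos : (0:ℝ) < 2*γ/β := by positivity
        have hμR : (0:ℝ) < (μ:ℝ) := by exact_mod_cast hμ1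
        have hμμ₀ : (μ:ℝ) ≤ (μ₀:ℝ) := by exact_mod_cast hμ
        have h1 : (2*γ/β) ^ ((μ:ℝ))⁻¹ ≤ (2*γ/β) ^ ((μ₀:ℝ))⁻¹ :=
          Real.rpow_le_rpow_of_exponent_ge hrpos hr.le (inv_anti₀ hμR hμμ₀)
        have h2 : (3:ℝ)^μ ≤ 3^μ₀ := pow_le_pow_right₀ (by norm_num) hμ
        have h3 : (0:ℝ) < (2*γ/β) ^ ((μ:ℝ))⁻¹ := Real.rpow_pos_of_pos hrpos _
        have h5 : (0:ℝ) < 3^μ := by positivity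
        nlinarith
    calc volume T
        ≤ ∑ i ∈ Finset.range N, volume (T ∩ Set.Icc ((i:ℝ)*h) (((i:ℝ)+1)*h)) :=
          (measure_mono hTsub).trans (measure_biUnion_finset_le _ _)
      _ ≤ ∑ _i ∈ Finset.range N, B := Finset.sum_le_sum hbound
      _ = (N : ℝ≥0∞) * B := by
          rw [Finset.sum_const, Finset.card_range, nsmul_eq_mul]
      _ ≤ ENNReal.ofReal (((N:ℝ) * 3^μ₀ + L) * (2/β) ^ ((μ₀:ℝ))⁻¹ * γ ^ ((μ₀:ℝ))⁻¹
            + 1 * γ ^ ((μ₀:ℝ))⁻¹) := by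
          rw [hBdef, ← ENNReal.ofReal_natCast N, ← ENNReal.ofReal_mul (by positivity)]
          apply ENNReal.ofReal_le_ofReal
          have hmul : (2*γ/β) ^ ((μ₀:ℝ))⁻¹ = (2/β) ^ ((μ₀:ℝ))⁻¹ * γ ^ ((μ₀:ℝ))⁻¹ := by
            rw [show 2*γ/β = (2/β)*γ by ring, Real.mul_rpow (by positivity) hγ.le]
          rw [hmul]
          have hNnn : (0:ℝ) ≤ (N:ℝ) := by positivity
          nlinarith [mul_pos hq hgt, mul_nonneg (mul_nonneg hNnn h3pow.le) (mul_pos hq hgt).le,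
            mul_nonneg (mul_nonneg hLpos.le hq.le) hgt.le]
      _ = ENNReal.ofReal ((((N:ℝ) * 3^μ₀ + L) * (2/β) ^ ((μ₀:ℝ))⁻¹ + 1) * γ ^ ((μ₀:ℝ))⁻¹) := by
          ring_nf
  · -- large γ: the trivial estimate suffices
    push_neg at hr
    have h1 : volume T ≤ ENNReal.ofReal L := by
      have h2 : T ⊆ Set.Icc (0:ℝ) L := fun x hx => hx.1
      refine (measure_mono h2).trans ?_
      rw [Real.volume_Icc, sub_zero]
    refine h1.trans (ENNReal.ofReal_le_ofReal ?_)
    have hmul : (2*γ/β) ^ ((μ₀:ℝ))⁻¹ = (2/β) ^ ((μ₀:ℝ))⁻¹ * γ ^ ((μ₀:ℝ))⁻¹ := by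
      rw [show 2*γ/β = (2/β)*γ by ring, Real.mul_rpow (by positivity) hγ.le]
    have h2 : (1:ℝ) ≤ (2*γ/β) ^ ((μ₀:ℝ))⁻¹ := Real.one_le_rpow hr (by positivity)
    rw [hmul] at h2
    have hNnn : (0:ℝ) ≤ (N:ℝ) := by positivity
    nlinarith [mul_pos hq hgt, mul_nonneg (mul_nonneg hNnn h3pow.le) (mul_pos hq hgt).le]
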